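/- Let p and q be distinct primes, α, β positive integers, and let G = ⟨a, b : a^(p^α) = 1, b^(q^β) = 1, b⁻¹ab = a^r⟩ where the multiplicative order of r modulo p^α is q^β. Then every element of G has prime power order. -/

import Mathlib

open Pointwise

private lemma comm_pow_aux {G : Type*} [Group G] (x y : G) (s : ℕ)
    (h : y⁻¹ * x * y = x ^ s) :
    ∀ m : ℕ, (x * y) ^ m = y ^ m * x ^ (s * ∑ t ∈ Finset.range m, s ^ t) := by
  have hk : ∀ k : ℕ, x ^ k * y = y * x ^ (k * s) := by
    intro k
    have h2 : (y⁻¹ * x * y) ^ k = y⁻¹ * x ^ k * y := by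
      simpa using conj_pow (i := k) (a := y⁻¹) (b := x)
    rw [h, ← pow_mul, mul_comm s k] at h2
    rw [h2]; group
  have hkm : ∀ k m : ℕ, x ^ k * y ^ m = y ^ m * x ^ (k * s ^ m) := by
    intro k m
    induction m generalizing k with
    | zero => simp
    | succ m ih =>
      calc x ^ k * y ^ (m + 1) = (x ^ k * y) * y ^ m := by rw [pow_succ']; group
        _ = y * (x ^ (k * s) * y ^ m) := by rw [hk]; group
        _ = y * (y ^ m * x ^ (k * s * s ^ m)) := by rw [ih]
        _ = (y * y ^ m) * x ^ (k * s * s ^ m) := by group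
        _ = y ^ (m + 1) * x ^ (k * s ^ (m + 1)) := by
            rw [← pow_succ']; congr 1; ring
  intro m
  induction m with
  | zero => simp
  | succ m ih =>
    calc (x * y) ^ (m + 1) = (x * y) ^ m * (x * y) := pow_succ _ _
      _ = y ^ m * (x ^ (s * ∑ t ∈ Finset.range m, s ^ t) * x) * y := by rw [ih]; group
      _ = y ^ m * (x ^ (s * (∑ t ∈ Finset.range m, s ^ t) + 1) * y) := by
          rw [← pow_succ]; group
      _ = y ^ m * (y * x ^ ((s * (∑ t ∈ Finset.range m, s ^ t) + 1) * s)) := by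
          rw [hk]
      _ = (y ^ m * y) * x ^ ((s * (∑ t ∈ Finset.range m, s ^ t) + 1) * s) := by group
      _ = y ^ (m + 1) * x ^ (s * ∑ t ∈ Finset.range (m + 1), s ^ t) := by
          rw [← pow_succ, geom_sum_succ]
          exact congrArg (fun n => y ^ (m+1) * x ^ n) (by ring)

theorem metacyclic_presentation_is_EPPO {G : Type*} [Group G] [Finite G]
    {p q : ℕ} (hp : p.Prime) (hq : q.Prime) (hpq : p ≠ q)
    {α β : ℕ} (hα : 0 < α) (hβ : 0 < β) (a b : G) (r : ℕ)
    (hgen : Subgroup.closure ({a, b} : Set G) = ⊤)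
    (ha : orderOf a = p ^ α) (hb : orderOf b = q ^ β)
    (hconj : b⁻¹ * a * b = a ^ r)
    (hr : orderOf (r : ZMod (p ^ α)) = q ^ β) :
    ∀ g : G, ∃ (s n : ℕ), s.Prime ∧ orderOf g = s ^ n := by
  haveI : NeZero (p ^ α) := ⟨pow_ne_zero _ hp.pos.ne'⟩
  have hrq : (r : ZMod (p ^ α)) ^ (q ^ β) = 1 := by rw [← hr]; exact pow_orderOf_eq_one _
  have hqb1 : q ^ β - 1 + 1 = q ^ β := Nat.succ_pred_eq_of_pos (pow_pos hq.pos β)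
  -- conjugation of powers of a by b
  have key : ∀ k : ℕ, b⁻¹ * a ^ k * b = a ^ (k * r) := by
    intro k
    have h2 : (b⁻¹ * a * b) ^ k = b⁻¹ * a ^ k * b := by
      simpa using conj_pow (i := k) (a := b⁻¹) (b := a)
    rw [hconj, ← pow_mul, mul_comm r k] at h2
    exact h2.symm
  have haone : a ^ (r ^ (q ^ β)) = a := by
    have hmod : (r ^ (q ^ β) : ℕ) ≡ 1 [MOD p ^ α] := by
      rw [← ZMod.natCast_eq_natCast_iff]; push_cast; simpa using hrq
    calc a ^ (r ^ (q ^ β)) = a ^ 1 := by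
          rw [pow_eq_pow_iff_modEq, ha]; exact hmod
      _ = a := pow_one a
  have hbab : b * a * b⁻¹ = a ^ (r ^ (q ^ β - 1)) := by
    have h1 : b⁻¹ * a ^ (r ^ (q ^ β - 1)) * b = a := by
      rw [key, ← pow_succ, hqb1, haone]
    have h2 := congrArg (fun z => b * z * b⁻¹) h1
    rw [← h2]; group
  -- zpowers a is normal
  have hNormal : (Subgroup.zpowers a).Normal := by
    rw [← Subgroup.normalizer_eq_top_iff, eq_top_iff, ← hgen, Subgroup.closure_le]
    refine Set.insert_subset_iff.mpr ⟨?_, Set.singleton_subset_iff.mpr ?_⟩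
    · exact Subgroup.le_normalizer (Subgroup.mem_zpowers a)
    · rw [SetLike.mem_coe, Subgroup.mem_normalizer_iff]
      intro h
      constructor
      · rintro ⟨k, rfl⟩
        have h3 : b * a ^ k * b⁻¹ = (b * a * b⁻¹) ^ k := conj_zpow.symm
        rw [h3, hbab, ← zpow_natCast, ← zpow_mul]
        exact Subgroup.zpow_mem _ (Subgroup.mem_zpowers a) _
      · rintro ⟨k, hk⟩
        simp only at hk
        have hh : h = b⁻¹ * a ^ k * b := by rw [hk]; group
        have h2 : b⁻¹ * a ^ k * b = (b⁻¹ * a * b) ^ k := by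
          have := conj_zpow (i := k) (a := b⁻¹) (b := a)
          simpa using this.symm
        rw [hh, h2, hconj, ← zpow_natCast, ← zpow_mul]
        exact Subgroup.zpow_mem _ (Subgroup.mem_zpowers a) _
  -- decomposition
  intro g
  have hsup : Subgroup.zpowers a ⊔ Subgroup.zpowers b = ⊤ := by
    rw [eq_top_iff, ← hgen, Subgroup.closure_le]
    refine Set.insert_subset_iff.mpr ⟨?_, Set.singleton_subset_iff.mpr ?_⟩
    · exact Subgroup.mem_sup_left (Subgroup.mem_zpowers a)
    · exact Subgroup.mem_sup_right (Subgroup.mem_zpowers b)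
  have hg : g ∈ (Subgroup.zpowers a : Set G) * (Subgroup.zpowers b : Set G) := by
    rw [← Subgroup.normal_mul, hsup]; trivial
  obtain ⟨x, hx, y, hy, rfl⟩ := hg
  have toNatPow : ∀ (z : G) (i : ℤ), ∃ n : ℕ, z ^ i = z ^ n := by
    intro z i
    have hz0 : (0 : ℤ) < (orderOf z : ℤ) := by exact_mod_cast (orderOf_pos z)
    refine ⟨(i % (orderOf z : ℤ)).toNat, ?_⟩
    rw [← zpow_natCast, Int.toNat_of_nonneg (Int.emod_nonneg _ hz0.ne'), zpow_mod_orderOf]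
  obtain ⟨i0, rfl⟩ := hx
  obtain ⟨j0, rfl⟩ := hy
  obtain ⟨i', hi'⟩ := toNatPow a i0
  obtain ⟨j', hj'⟩ := toNatPow b j0
  beta_reduce
  rw [hi', hj']
  -- conjugation by powers of b
  have hconjpow : ∀ jj : ℕ, (b ^ jj)⁻¹ * a ^ i' * b ^ jj = (a ^ i') ^ (r ^ jj) := by
    intro jj
    induction jj with
    | zero => simp
    | succ n ih =>
      have step : (b ^ (n + 1))⁻¹ * a ^ i' * b ^ (n + 1)
          = b⁻¹ * ((b ^ n)⁻¹ * a ^ i' * b ^ n) * b := by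
        rw [pow_succ]; group
      rw [step, ih, ← pow_mul, key, ← pow_mul]
      exact congrArg (a ^ ·) (by ring)
  have hgpow := comm_pow_aux (a ^ i') (b ^ j') (r ^ j') (hconjpow j') (q ^ β)
  have hbq : (b ^ j') ^ (q ^ β) = 1 := by
    rw [← pow_mul, mul_comm, pow_mul, ← hb, pow_orderOf_eq_one, one_pow]
  by_cases hu : ((r : ZMod (p ^ α)) ^ j' = 1)
  · -- b ^ j' = 1, element lies in ⟨a⟩
    have hdvd : q ^ β ∣ j' := hr ▸ orderOf_dvd_of_pow_eq_one hu
    have hbj : b ^ j' = 1 := by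
      obtain ⟨t, rfl⟩ := hdvd
      rw [pow_mul, ← hb, pow_orderOf_eq_one, one_pow]
    rw [hbj, mul_one]
    have hdvd2 : orderOf (a ^ i') ∣ p ^ α := by
      apply orderOf_dvd_of_pow_eq_one
      rw [← pow_mul, mul_comm, pow_mul, ← ha, pow_orderOf_eq_one, one_pow]
    obtain ⟨n, -, hn⟩ := (Nat.dvd_prime_pow hp).mp hdvd2
    exact ⟨p, n, hp, hn⟩
  · set u : ZMod (p ^ α) := (r : ZMod (p ^ α)) ^ j' with hudef
    have huq : u ^ (q ^ β) = 1 := by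
      rw [hudef, ← pow_mul, mul_comm, pow_mul, hrq, one_pow]
    have hIsUnit : IsUnit u := by
      apply IsUnit.of_mul_eq_one (u ^ (q ^ β - 1))
      rw [← pow_succ', hqb1, huq]
    have hOrdDvd : orderOf u ∣ q ^ β := orderOf_dvd_of_pow_eq_one huq
    have hOrdNe : orderOf u ≠ 1 := by
      intro h1; exact hu (orderOf_eq_one_iff.mp h1)
    have hqo : q ∣ orderOf u := by
      obtain ⟨k, hk, hko⟩ := (Nat.dvd_prime_pow hq).mp hOrdDvd
      cases k with
      | zero => exact absurd (by simpa using hko) hOrdNe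
      | succ k => exact hko ▸ dvd_pow_self q (Nat.succ_ne_zero _)
    have hpd : p ∣ p ^ α := dvd_pow_self p hα.ne'
    set f := ZMod.castHom hpd (ZMod p) with hfdef
    -- f u ≠ 1 via units kernel cardinality
    have hfu : f u ≠ 1 := by
      intro hfu1
      set φ := ZMod.unitsMap hpd with hφdef
      have hUker : hIsUnit.unit ∈ φ.ker := by
        rw [MonoidHom.mem_ker]
        apply Units.ext
        rw [hφdef, ZMod.unitsMap_def]
        simpa [hIsUnit.unit_spec, hfdef] using hfu1
      have hsurj := ZMod.unitsMap_surjective (n := p) hpd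
      have e := QuotientGroup.quotientKerEquivOfSurjective φ hsurj
      have h1 : Nat.card ((ZMod (p ^ α))ˣ)
          = Nat.card ((ZMod (p ^ α))ˣ ⧸ φ.ker) * Nat.card φ.ker :=
        Subgroup.card_eq_card_quotient_mul_card_subgroup _
      rw [Nat.card_congr e.toEquiv] at h1
      haveI : NeZero p := ⟨hp.pos.ne'⟩
      have h2 : Nat.card ((ZMod (p ^ α))ˣ) = Nat.totient (p ^ α) := by
        rw [Nat.card_eq_fintype_card, ZMod.card_units_eq_totient]
      have h3 : Nat.card ((ZMod p)ˣ) = Nat.totient p := by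
        rw [Nat.card_eq_fintype_card, ZMod.card_units_eq_totient]
      rw [h2, h3, Nat.totient_prime_pow hp hα, Nat.totient_prime hp] at h1
      have hker : Nat.card φ.ker = p ^ (α - 1) := by
        have hp1 : 0 < p - 1 := by have := hp.two_le; omega
        apply Nat.eq_of_mul_eq_mul_left hp1
        rw [← h1]; ring
      have hOrdU : orderOf u ∣ p ^ (α - 1) := by
        rw [← hker]
        have := Subgroup.orderOf_dvd_natCard _ hUker
        rwa [← orderOf_units, hIsUnit.unit_spec] at this
      have : q ∣ p := hq.dvd_of_dvd_pow (hqo.trans hOrdU)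
      exact hpq ((Nat.prime_dvd_prime_iff_eq hq hp).mp this).symm
    have hval : (((u - 1).val : ℕ) : ZMod (p ^ α)) = u - 1 := by
      rw [ZMod.natCast_val, ZMod.cast_id]
    have hUnit1 : IsUnit (u - 1) := by
      rw [← hval, ZMod.isUnit_iff_coprime]
      apply Nat.Coprime.pow_right
      rw [Nat.coprime_comm]
      rw [hp.coprime_iff_not_dvd]
      intro hdvd
      apply hfu
      have h0 : f (u - 1) = 0 := by
        rw [← hval, map_natCast]
        exact (ZMod.natCast_eq_zero_iff _ _).mpr hdvd
      rw [map_sub, map_one, sub_eq_zero] at h0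
      exact h0
    have hsum : (∑ t ∈ Finset.range (q ^ β), u ^ t) = 0 := by
      have h0 : (∑ t ∈ Finset.range (q ^ β), u ^ t) * (u - 1) = 0 := by
        rw [geom_sum_mul, huq, sub_self]
      exact (hUnit1.mul_left_eq_zero).mp h0
    set c : ℕ := r ^ j' * ∑ t ∈ Finset.range (q ^ β), (r ^ j') ^ t with hc
    have hcz : (c : ZMod (p ^ α)) = 0 := by
      rw [hc]
      push_cast
      rw [← hudef]
      rw [hsum, mul_zero]
    have hdvdc : p ^ α ∣ c := (ZMod.natCast_eq_zero_iff _ _).mp hcz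
    have hac : (a ^ i') ^ c = 1 := by
      obtain ⟨t, ht⟩ := hdvdc
      rw [← pow_mul, mul_comm i' c, ht, mul_assoc, pow_mul, ← ha, pow_orderOf_eq_one, one_pow]
    have hg1 : (a ^ i' * b ^ j') ^ (q ^ β) = 1 := by
      rw [hgpow, hbq, one_mul]; exact hac
    obtain ⟨n, -, hn⟩ :=
      (Nat.dvd_prime_pow hq).mp (orderOf_dvd_of_pow_eq_one hg1)
    exact ⟨q, n, hq, hn⟩
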